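/- Let 0 < ε < 1 and let g₀ > 0 be the unique positive real satisfying g₀·Q(g₀/√(2π)) = (1 − ε)·exp(−g₀²/(4π)). Suppose g > 0 and q > 0 satisfy g·exp(q²/2)·Q(q) = 1 − ε. Then q ≥ g/√(2π) if and only if g ≥ g₀. -/

import Mathlib

open MeasureTheory Real

/-- The standard Gaussian tail probability `Q x = (1/√(2π)) ∫ₓ^∞ exp(-u²/2) du`. -/
noncomputable def Q (x : ℝ) : ℝ :=
  (Real.sqrt (2 * π))⁻¹ * ∫ u in Set.Ioi x, Real.exp (-u^2/2)

/-- Auxiliary: `Ft x = ∫_{Ioi 0} exp(-(t²/2 + t x)) dt`. -/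
noncomputable def Ft (x : ℝ) : ℝ := ∫ t in Set.Ioi (0:ℝ), Real.exp (-(t^2/2 + t*x))

lemma intFt (x : ℝ) : Integrable (fun t : ℝ => Real.exp (-(t^2/2 + t*x))) := by
  have h0 : Integrable (fun u : ℝ => Real.exp (-(1/2 : ℝ) * u^2)) :=
    integrable_exp_neg_mul_sq (by norm_num)
  have h1 : Integrable ((fun u : ℝ => Real.exp (-(1/2 : ℝ) * u^2)) ∘ (fun t => t + x)) :=
    ((measurePreserving_add_right volume x).integrable_comp
      h0.aestronglyMeasurable).mpr h0
  have h2 := h1.const_mul (Real.exp (x^2/2))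
  have heq : (fun t : ℝ => Real.exp (x^2/2) *
      ((fun u : ℝ => Real.exp (-(1/2 : ℝ) * u^2)) ∘ (fun t => t + x)) t)
      = fun t : ℝ => Real.exp (-(t^2/2 + t*x)) := by
    funext t
    simp only [Function.comp_apply]
    rw [← Real.exp_add]
    congr 1
    ring
  rw [heq] at h2
  exact h2

lemma Ft_eq (x : ℝ) :
    Real.exp (x^2/2) * ∫ u in Set.Ioi x, Real.exp (-u^2/2) = Ft x := by
  have hemb : MeasurableEmbedding (fun t : ℝ => t + x) :=
    (Homeomorph.addRight x).measurableEmbedding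
  have hmap : Measure.map (fun t : ℝ => t + x) volume = volume :=
    map_add_right_eq_self volume x
  have h1 : (∫ u in Set.Ioi x, Real.exp (-u^2/2))
      = ∫ t in Set.Ioi (0:ℝ), Real.exp (-(t+x)^2/2) := by
    conv_lhs => rw [← hmap]
    rw [hemb.setIntegral_map (fun u => Real.exp (-u^2/2)) (Set.Ioi x),
      Set.preimage_add_const_Ioi, sub_self]
  rw [h1, Ft, ← integral_const_mul]
  apply setIntegral_congr_fun measurableSet_Ioi
  intro t _
  dsimp only
  rw [← Real.exp_add]
  congr 1
  ring

lemma Ft_anti : StrictAnti Ft := by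
  intro a b hab
  have hint_a := (intFt a).integrableOn (s := Set.Ioi 0)
  have hint_b := (intFt b).integrableOn (s := Set.Ioi 0)
  have hsub : 0 < ∫ t in Set.Ioi (0:ℝ),
      (Real.exp (-(t^2/2 + t*a)) - Real.exp (-(t^2/2 + t*b))) := by
    rw [setIntegral_pos_iff_support_of_nonneg_ae]
    · have hsupp : Set.Ioi (0:ℝ) ⊆ Function.support
          (fun t => Real.exp (-(t^2/2 + t*a)) - Real.exp (-(t^2/2 + t*b))) := by
        intro t ht
        have hx : Real.exp (-(t^2/2 + t*b)) < Real.exp (-(t^2/2 + t*a)) := by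
          apply Real.exp_lt_exp.mpr
          have := mul_lt_mul_of_pos_left hab (Set.mem_Ioi.mp ht)
          linarith
        simp only [Function.mem_support]
        intro h
        nlinarith
      have heqv : volume (Function.support
          (fun t => Real.exp (-(t^2/2 + t*a)) - Real.exp (-(t^2/2 + t*b))) ∩ Set.Ioi 0)
          = volume (Set.Ioi (0:ℝ)) := by
        congr 1
        exact Set.inter_eq_right.mpr hsupp
      rw [heqv]
      simp [Real.volume_Ioi]
    · filter_upwards [ae_restrict_mem measurableSet_Ioi] with t ht
      have ht0 : 0 < t := ht
      have : Real.exp (-(t^2/2 + t*b)) ≤ Real.exp (-(t^2/2 + t*a)) := by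
        apply Real.exp_le_exp.mpr
        nlinarith
      simpa using this
    · exact hint_a.sub hint_b
  have := integral_sub hint_a hint_b
  rw [this] at hsub
  simp only [Ft]
  linarith

/-- Auxiliary: `fF g = ∫_{Ioi 0} exp(-(s²/(2g²) + s/√(2π))) ds`. -/
noncomputable def fF (g : ℝ) : ℝ :=
  ∫ s in Set.Ioi (0:ℝ), Real.exp (-(s^2/(2*g^2) + s/Real.sqrt (2*π)))

lemma sqrt2pi_pos : 0 < Real.sqrt (2*π) :=
  Real.sqrt_pos.mpr (by positivity)

lemma intfF (g : ℝ) : IntegrableOn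
    (fun s : ℝ => Real.exp (-(s^2/(2*g^2) + s/Real.sqrt (2*π)))) (Set.Ioi 0) := by
  have hb : (0:ℝ) < (Real.sqrt (2*π))⁻¹ := inv_pos.mpr sqrt2pi_pos
  have hdom := exp_neg_integrableOn_Ioi (0:ℝ) hb
  apply Integrable.mono hdom
  · apply Continuous.aestronglyMeasurable
    fun_prop
  · filter_upwards [ae_restrict_mem measurableSet_Ioi] with s hs
    have hs0 : 0 < s := hs
    rw [Real.norm_eq_abs, Real.norm_eq_abs, abs_of_pos (Real.exp_pos _),
      abs_of_pos (Real.exp_pos _)]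
    apply Real.exp_le_exp.mpr
    have h1 : 0 ≤ s^2/(2*g^2) := by positivity
    have h2 : s / Real.sqrt (2*π) = (Real.sqrt (2*π))⁻¹ * s := by
      rw [div_eq_inv_mul]
    rw [h2] at *
    linarith

lemma fF_eq (g : ℝ) (hg : 0 < g) : g * Ft (g / Real.sqrt (2*π)) = fF g := by
  have key := integral_comp_mul_left_Ioi
    (fun s : ℝ => Real.exp (-(s^2/(2*g^2) + s/Real.sqrt (2*π)))) 0 hg
  have h1 : (∫ t in Set.Ioi (0:ℝ),
      Real.exp (-((g*t)^2/(2*g^2) + (g*t)/Real.sqrt (2*π))))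
      = Ft (g / Real.sqrt (2*π)) := by
    apply setIntegral_congr_fun measurableSet_Ioi
    intro t _
    dsimp only
    congr 1
    rw [mul_pow]
    field_simp
  rw [mul_zero] at key
  rw [← h1]
  rw [key, fF, smul_eq_mul, mul_inv_cancel_left₀ hg.ne']

lemma fF_mono : StrictMonoOn fF (Set.Ioi 0) := by
  intro a ha b hb hab
  have ha0 : (0:ℝ) < a := ha
  have hb0 : (0:ℝ) < b := hb
  have hint_a := intfF a
  have hint_b := intfF b
  have hsub : 0 < ∫ s in Set.Ioi (0:ℝ),
      (Real.exp (-(s^2/(2*b^2) + s/Real.sqrt (2*π)))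
        - Real.exp (-(s^2/(2*a^2) + s/Real.sqrt (2*π)))) := by
    rw [setIntegral_pos_iff_support_of_nonneg_ae]
    · have hsupp : Set.Ioi (0:ℝ) ⊆ Function.support
          (fun s => Real.exp (-(s^2/(2*b^2) + s/Real.sqrt (2*π)))
            - Real.exp (-(s^2/(2*a^2) + s/Real.sqrt (2*π)))) := by
        intro s hs
        have hs0 : 0 < s := hs
        have hlt : s^2/(2*b^2) < s^2/(2*a^2) := by
          apply div_lt_div_of_pos_left (by positivity) (by positivity)
          nlinarith
        have : Real.exp (-(s^2/(2*a^2) + s/Real.sqrt (2*π)))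
            < Real.exp (-(s^2/(2*b^2) + s/Real.sqrt (2*π))) := by
          apply Real.exp_lt_exp.mpr
          linarith
        simp only [Function.mem_support]
        intro h
        nlinarith
      have heq : volume (Function.support
          (fun s => Real.exp (-(s^2/(2*b^2) + s/Real.sqrt (2*π)))
            - Real.exp (-(s^2/(2*a^2) + s/Real.sqrt (2*π)))) ∩ Set.Ioi 0)
          = volume (Set.Ioi (0:ℝ)) := by
        congr 1
        exact Set.inter_eq_right.mpr hsupp
      rw [heq]
      simp [Real.volume_Ioi]
    · filter_upwards [ae_restrict_mem measurableSet_Ioi] with s hs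
      have hs0 : 0 < s := hs
      have hle : s^2/(2*b^2) ≤ s^2/(2*a^2) := by
        apply div_le_div_of_nonneg_left (by positivity) (by positivity)
        nlinarith
      have : Real.exp (-(s^2/(2*a^2) + s/Real.sqrt (2*π)))
          ≤ Real.exp (-(s^2/(2*b^2) + s/Real.sqrt (2*π))) := by
        apply Real.exp_le_exp.mpr
        linarith
      simpa using this
    · exact hint_b.sub hint_a
  have := integral_sub hint_b hint_a
  rw [this] at hsub
  simp only [fF]
  linarith

theorem stmt_10 (ε g₀ g q : ℝ) (hε0 : 0 < ε) (hε1 : ε < 1) (hg₀ : 0 < g₀)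
    (hg₀eq : g₀ * Q (g₀ / Real.sqrt (2*π)) = (1 - ε) * Real.exp (-g₀^2/(4*π)))
    (hg₀uniq : ∀ g' : ℝ, 0 < g' →
      g' * Q (g' / Real.sqrt (2*π)) = (1 - ε) * Real.exp (-g'^2/(4*π)) → g' = g₀)
    (hg : 0 < g) (hq : 0 < q)
    (heq : g * Real.exp (q^2/2) * Q q = 1 - ε) :
    g / Real.sqrt (2*π) ≤ q ↔ g₀ ≤ g := by
  have hS : 0 < Real.sqrt (2*π) := sqrt2pi_pos
  have hS2 : Real.sqrt (2*π) ^ 2 = 2*π := Real.sq_sqrt (by positivity)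
  -- rewrite heq : g * Ft q = (1-ε) * √(2π)
  have heq' : g * Ft q = (1 - ε) * Real.sqrt (2*π) := by
    rw [Q] at heq
    have h1 : (Real.sqrt (2*π))⁻¹ * (g * Ft q) = 1 - ε := by
      rw [← Ft_eq q]
      calc (Real.sqrt (2*π))⁻¹ * (g * (Real.exp (q^2/2)
              * ∫ u in Set.Ioi q, Real.exp (-u^2/2)))
          = g * Real.exp (q^2/2) * ((Real.sqrt (2*π))⁻¹
              * ∫ u in Set.Ioi q, Real.exp (-u^2/2)) := by ring
        _ = 1 - ε := heq
    rw [inv_mul_eq_iff_eq_mul₀ hS.ne'] at h1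
    rw [h1, mul_comm]
  -- rewrite hg₀eq : fF g₀ = (1-ε) * √(2π)
  have hexp : Real.exp (-g₀^2/(4*π)) * Real.exp ((g₀ / Real.sqrt (2*π))^2/2) = 1 := by
    rw [← Real.exp_add, ← Real.exp_zero]
    congr 1
    rw [div_pow, hS2]
    have hπ : (0:ℝ) < π := Real.pi_pos
    field_simp
    ring
  have hg₀' : fF g₀ = (1 - ε) * Real.sqrt (2*π) := by
    rw [← fF_eq g₀ hg₀]
    have := Ft_eq (g₀ / Real.sqrt (2*π))
    rw [Q] at hg₀eq
    have key : g₀ * (Real.exp ((g₀ / Real.sqrt (2*π))^2/2) *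
        ((Real.sqrt (2*π))⁻¹ * ∫ u in Set.Ioi (g₀ / Real.sqrt (2*π)), Real.exp (-u^2/2)))
        = 1 - ε := by
      rw [← mul_assoc, mul_comm g₀ _, mul_assoc, hg₀eq, ← mul_assoc,
        mul_comm (Real.exp _) _, mul_assoc, mul_comm (Real.exp _) (Real.exp _), hexp, mul_one]
    have h2 : (Real.sqrt (2*π))⁻¹ * (g₀ * Ft (g₀ / Real.sqrt (2*π))) = 1 - ε := by
      rw [← this]
      calc (Real.sqrt (2*π))⁻¹ * (g₀ * (Real.exp ((g₀ / Real.sqrt (2*π))^2/2)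
              * ∫ u in Set.Ioi (g₀ / Real.sqrt (2*π)), Real.exp (-u^2/2)))
          = g₀ * (Real.exp ((g₀ / Real.sqrt (2*π))^2/2) *
              ((Real.sqrt (2*π))⁻¹
                * ∫ u in Set.Ioi (g₀ / Real.sqrt (2*π)), Real.exp (-u^2/2))) := by ring
        _ = 1 - ε := key
    rw [inv_mul_eq_iff_eq_mul₀ hS.ne'] at h2
    rw [h2, mul_comm]
  constructor
  · intro hle
    by_contra hcon
    push_neg at hcon
    have h1 : Ft q ≤ Ft (g / Real.sqrt (2*π)) := Ft_anti.antitone hle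
    have h2 : fF g₀ ≤ fF g := by
      rw [hg₀', ← heq', ← fF_eq g hg]
      exact mul_le_mul_of_nonneg_left h1 hg.le
    have h3 : fF g < fF g₀ := fF_mono (Set.mem_Ioi.mpr hg) (Set.mem_Ioi.mpr hg₀) hcon
    linarith
  · intro hge
    by_contra hcon
    push_neg at hcon
    have h1 : Ft (g / Real.sqrt (2*π)) < Ft q := Ft_anti hcon
    have h2 : fF g < fF g₀ := by
      rw [hg₀', ← heq', ← fF_eq g hg]
      exact mul_lt_mul_of_pos_left h1 hg
    have h3 : fF g₀ ≤ fF g :=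
      fF_mono.monotoneOn (Set.mem_Ioi.mpr hg₀) (Set.mem_Ioi.mpr hg) hge
    linarith
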